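/- Let x_{k+1} = A x_k + B u_k with (A,B) controllable, and suppose the input sequence u_0,…,u_{T−1} is persistently exciting of order n_x + t. Then the stacked matrix [H_1(x); H_t(u)] formed from the state Hankel matrix of depth 1 and input Hankel matrix of depth t has full row rank (Willems' fundamental lemma rank condition). -/

import Mathlib

open Matrix

lemma vecMul_sum' {ι m n : Type*} [Fintype m] (F : Finset ι) (v : m → ℝ)
    (M : ι → Matrix m n ℝ) : v ᵥ* (∑ i ∈ F, M i) = ∑ i ∈ F, v ᵥ* M i := by
  ext j
  simp [vecMul, dotProduct, Matrix.sum_apply, Finset.mul_sum]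
  rw [Finset.sum_comm]

lemma vecMul_smulM {m n : Type*} [Fintype m] (c : ℝ) (v : m → ℝ) (M : Matrix m n ℝ) :
    v ᵥ* (c • M) = c • (v ᵥ* M) := by
  ext j
  simp [vecMul, dotProduct, Finset.mul_sum]
  ring_nf
  exact Finset.sum_congr rfl fun i _ => by ring

lemma sum_dotProduct' {ι n : Type*} [Fintype n] (F : Finset ι) (f : ι → n → ℝ) (w : n → ℝ) :
    (∑ i ∈ F, f i) ⬝ᵥ w = ∑ i ∈ F, f i ⬝ᵥ w := by
  simp [dotProduct, Finset.sum_apply, Finset.sum_mul]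
  rw [Finset.sum_comm]

lemma dotProduct_sum' {ι n : Type*} [Fintype n] (F : Finset ι) (v : n → ℝ) (f : ι → n → ℝ) :
    v ⬝ᵥ (∑ i ∈ F, f i) = ∑ i ∈ F, v ⬝ᵥ f i := by
  simp [dotProduct, Finset.sum_apply, Finset.mul_sum]
  rw [Finset.sum_comm]

lemma reindex_aux {nu : ℕ} (N s t j : ℕ) (hs : s ≤ N) (g e : ℕ → Fin nu → ℝ)
    (U : ℕ → Fin nu → ℝ) :
    ∑ m ∈ Finset.range (N + t),
      (((if m < s then g (s - 1 - m) else 0)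
        + (if s ≤ m ∧ m - s < t then e (m - s) else 0)) ⬝ᵥ U (j + m))
    = (∑ k ∈ Finset.range s, g k ⬝ᵥ U (j + s - 1 - k))
      + ∑ i ∈ Finset.range t, e i ⬝ᵥ U (i + (j + s)) := by
  simp only [add_dotProduct]
  rw [Finset.sum_add_distrib]
  congr 1
  · have h1 : ∀ m ∈ Finset.range (N + t),
        (if m < s then g (s - 1 - m) else 0) ⬝ᵥ U (j + m)
        = if m < s then g (s - 1 - m) ⬝ᵥ U (j + m) else 0 := by
      intro m _; split_ifs <;> simp
    rw [Finset.sum_congr rfl h1]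
    rw [← Finset.sum_subset (Finset.range_subset_range.mpr (by omega : s ≤ N + t))
        (fun m _ hm => if_neg (by simp at hm; omega))]
    rw [Finset.sum_congr rfl (fun m hm => if_pos (Finset.mem_range.mp hm))]
    rw [← Finset.sum_range_reflect (fun k => g k ⬝ᵥ U (j + s - 1 - k)) s]
    refine Finset.sum_congr rfl fun m hm => ?_
    have hm' := Finset.mem_range.mp hm
    have e1 : s - 1 - (s - 1 - m) = m := by omega
    have e2 : j + s - 1 - (s - 1 - m) = j + m := by omega
    rw [e2]
  · have h1 : ∀ m ∈ Finset.range (N + t),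
        (if s ≤ m ∧ m - s < t then e (m - s) else 0) ⬝ᵥ U (j + m)
        = if s ≤ m ∧ m - s < t then e (m - s) ⬝ᵥ U (j + m) else 0 := by
      intro m _; split_ifs <;> simp
    rw [Finset.sum_congr rfl h1]
    rw [← Finset.sum_subset (show Finset.Ico s (s + t) ⊆ Finset.range (N + t) from
        fun m hm => Finset.mem_range.mpr (by have := Finset.mem_Ico.mp hm; omega))
        (fun m hmr hm => if_neg (by simp [Finset.mem_Ico] at hm ⊢; omega))]
    rw [Finset.sum_congr rfl (fun m hm => if_pos (by have := Finset.mem_Ico.mp hm; omega))]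
    rw [Finset.sum_Ico_eq_sum_range]
    simp only [Nat.add_sub_cancel_left]
    refine Finset.sum_congr rfl fun i hi => ?_
    have e1 : s + i - s = i := by omega
    have e2 : j + (s + i) = i + (j + s) := by omega
    rw [e2]

noncomputable def Wfun {nu : ℕ} (N t : ℕ) (c : ℕ → ℝ) (g e : ℕ → Fin nu → ℝ) :
    ℕ → Fin nu → ℝ :=
  fun m => ∑ s ∈ Finset.range (N + 1),
    c s • ((if m < s then g (s - 1 - m) else 0) + (if s ≤ m ∧ m - s < t then e (m - s) else 0))

lemma eta_zero {nu : ℕ} (N t : ℕ) (c : ℕ → ℝ) (hc : c N = 1) (g e : ℕ → Fin nu → ℝ)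
    (hW : ∀ m < N + t, Wfun N t c g e m = 0) :
    ∀ i, i < t → e i = 0 := by
  have key : ∀ d i, i < t → t - i ≤ d → e i = 0 := by
    intro d
    induction d with
    | zero => intro i h1 h2; omega
    | succ d ih =>
      intro i h1 h2
      have h3 := hW (N + i) (by omega)
      rw [Wfun, Finset.sum_range_succ] at h3
      have h4 : ∀ s ∈ Finset.range N,
          c s • ((if N + i < s then g (s - 1 - (N + i)) else 0)
            + (if s ≤ N + i ∧ N + i - s < t then e (N + i - s) else 0)) = 0 := by
        intro s hs
        have hs' := Finset.mem_range.mp hs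
        rw [if_neg (by omega)]
        rcases Classical.em (s ≤ N + i ∧ N + i - s < t) with h | h
        · rw [if_pos h, ih (N + i - s) h.2 (by omega), zero_add, smul_zero]
        · rw [if_neg h, zero_add, smul_zero]
      rw [Finset.sum_eq_zero h4, zero_add, if_neg (by omega), zero_add,
        if_pos ⟨by omega, by simpa using h1⟩, Nat.add_sub_cancel_left, hc, one_smul] at h3
      exact h3
  exact fun i hi => key t i hi (by omega)

lemma g_zero {nu : ℕ} (N t : ℕ) (c : ℕ → ℝ) (hc : c N = 1) (g e : ℕ → Fin nu → ℝ)
    (he : ∀ i, i < t → e i = 0)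
    (hW : ∀ m < N + t, Wfun N t c g e m = 0) :
    ∀ k, k < N → g k = 0 := by
  intro k
  induction k using Nat.strong_induction_on with
  | _ k ih =>
    intro hk
    have h3 := hW (N - 1 - k) (by omega)
    rw [Wfun, Finset.sum_range_succ] at h3
    have h4 : ∀ s ∈ Finset.range N,
        c s • ((if N - 1 - k < s then g (s - 1 - (N - 1 - k)) else 0)
          + (if s ≤ N - 1 - k ∧ N - 1 - k - s < t then e (N - 1 - k - s) else 0)) = 0 := by
      intro s hs
      have hs' := Finset.mem_range.mp hs
      have h5 : (if s ≤ N - 1 - k ∧ N - 1 - k - s < t then e (N - 1 - k - s) else 0) = 0 := by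
        rcases Classical.em (s ≤ N - 1 - k ∧ N - 1 - k - s < t) with h | h
        · rw [if_pos h, he _ h.2]
        · rw [if_neg h]
      rw [h5, add_zero]
      rcases Classical.em (N - 1 - k < s) with h | h
      · rw [if_pos h, ih (s - 1 - (N - 1 - k)) (by omega) (by omega), smul_zero]
      · rw [if_neg h, smul_zero]
    have h6 : (if N - 1 - k ≤ N - 1 - k ∧ N - 1 - k - (N - 1 - k) < t then
        e (N - 1 - k - (N - 1 - k)) else 0) = 0 := by
      rcases Classical.em (N - 1 - k ≤ N - 1 - k ∧ N - 1 - k - (N - 1 - k) < t) with h | h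
      · rw [if_pos h, he _ h.2]
      · rw [if_neg h]
    rw [Finset.sum_eq_zero h4, zero_add, if_pos (by omega : N - 1 - k < N)] at h3
    have e1 : N - 1 - (N - 1 - k) = k := by omega
    rw [e1] at h3
    have h7 : (if N ≤ N - 1 - k ∧ N - 1 - k - N < t then e (N - 1 - k - N) else 0) = 0 := by
      rcases Classical.em (N ≤ N - 1 - k ∧ N - 1 - k - N < t) with h | h
      · rw [if_pos h, he _ h.2]
      · rw [if_neg h]
    rw [h7, add_zero, hc, one_smul] at h3
    exact h3

lemma state_formula {nx nu : ℕ} (A : Matrix (Fin nx) (Fin nx) ℝ) (B : Matrix (Fin nx) (Fin nu) ℝ)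
    (u : ℕ → Fin nu → ℝ) (x : ℕ → Fin nx → ℝ)
    (hdyn : ∀ k, x (k + 1) = A *ᵥ (x k) + B *ᵥ (u k)) :
    ∀ s j, x (j + s) = (A ^ s) *ᵥ x j
      + ∑ k ∈ Finset.range s, (A ^ k * B) *ᵥ u (j + s - 1 - k) := by
  intro s
  induction s with
  | zero => intro j; simp
  | succ s ih =>
    intro j
    have h1 : j + (s + 1) = (j + s) + 1 := by omega
    have hsum : A *ᵥ (∑ k ∈ Finset.range s, (A ^ k * B) *ᵥ u (j + s - 1 - k))
        = ∑ k ∈ Finset.range s, (A ^ (k + 1) * B) *ᵥ u (j + s - 1 - k) := by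
      rw [← A.mulVecLin_apply, map_sum]
      refine Finset.sum_congr rfl fun k _ => ?_
      rw [mulVecLin_apply, mulVec_mulVec, ← Matrix.mul_assoc, ← pow_succ']
    rw [h1, hdyn, ih j, mulVec_add, mulVec_mulVec, ← pow_succ', hsum, add_assoc]
    congr 1
    rw [Finset.sum_range_succ']
    congr 1
    · refine Finset.sum_congr rfl fun k _ => ?_
      have h2 : j + s + 1 - 1 - (k + 1) = j + s - 1 - k := by omega
      rw [h2]
    · have h3 : j + s + 1 - 1 - 0 = j + s := by omega
      rw [h3, pow_zero, Matrix.one_mul]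
lemma vecMul_eq_sum_smul {m n : Type*} [Fintype m] (M : Matrix m n ℝ) (v : m → ℝ) :
    v ᵥ* M = ∑ i, v i • M i := by
  ext j; simp [vecMul, dotProduct, Finset.sum_apply]

lemma rank_eq_card_rows_iff {m n : Type*} [Fintype m] [Fintype n] (M : Matrix m n ℝ) :
    M.rank = Fintype.card m ↔ ∀ v : m → ℝ, v ᵥ* M = 0 → v = 0 := by
  have h1 : M.rank = Fintype.card m ↔ LinearIndependent ℝ M.row := by
    rw [linearIndependent_iff_card_eq_finrank_span, Set.finrank,
      ← rank_eq_finrank_span_row, eq_comm]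
  rw [h1, Fintype.linearIndependent_iff]
  constructor
  · intro h v hv
    funext i
    exact h v (by show ∑ i, v i • M i = 0; rw [← vecMul_eq_sum_smul, hv]) i
  · intro h g hg
    have := h g (by rw [vecMul_eq_sum_smul]; exact hg)
    exact fun i => congrFun this i

/-- Willems' fundamental lemma rank condition: for a controllable pair `(A,B)` and a
state trajectory driven by an input which is persistently exciting of order `n_x + t`,
the stacked matrix `[H_1(x); H_t(u)]` has full row rank `n_x + t·n_u`. -/
theorem willems_fundamental_rank {nx nu T t : ℕ} (ht : 1 ≤ t) (hT : nx + t ≤ T)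
    (A : Matrix (Fin nx) (Fin nx) ℝ) (B : Matrix (Fin nx) (Fin nu) ℝ)
    (hctrb : ∀ v : Fin nx → ℝ, (∀ k : ℕ, Matrix.vecMul v (A ^ k * B) = 0) → v = 0)
    (u : ℕ → Fin nu → ℝ) (x : ℕ → Fin nx → ℝ)
    (hdyn : ∀ k, x (k + 1) = A.mulVec (x k) + B.mulVec (u k))
    (hPE : (Matrix.of fun (ip : Fin (nx + t) × Fin nu) (j : Fin (T - (nx + t) + 1)) =>
        u ((ip.1 : ℕ) + (j : ℕ)) ip.2).rank = (nx + t) * nu) :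
    (Matrix.fromRows
        (Matrix.of fun (p : Fin nx) (j : Fin (T - t + 1)) => x (j : ℕ) p)
        (Matrix.of fun (ip : Fin t × Fin nu) (j : Fin (T - t + 1)) =>
          u ((ip.1 : ℕ) + (j : ℕ)) ip.2)).rank = nx + t * nu := by
  classical
  -- the PE matrix has trivial left kernel
  have hker : ∀ w : Fin (nx + t) × Fin nu → ℝ,
      w ᵥ* (Matrix.of fun (ip : Fin (nx + t) × Fin nu) (j : Fin (T - (nx + t) + 1)) =>
        u ((ip.1 : ℕ) + (j : ℕ)) ip.2) = 0 → w = 0 :=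
    (rank_eq_card_rows_iff _).mp (by rw [hPE]; simp)
  have hcard1 : nx + t * nu = Fintype.card (Fin nx ⊕ Fin t × Fin nu) := by simp
  rw [hcard1]
  refine (rank_eq_card_rows_iff _).mpr ?_
  intro v hv
  set ξ : Fin nx → ℝ := fun p => v (Sum.inl p) with hξdef
  set ζ : Fin t × Fin nu → ℝ := fun q => v (Sum.inr q) with hζdef
  set ηf : ℕ → Fin nu → ℝ := fun i => if h : i < t then (fun p => ζ (⟨i, h⟩, p)) else 0
    with hηdef
  set c : ℕ → ℝ := fun s => A.charpoly.coeff s with hcdef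
  set g : ℕ → Fin nu → ℝ := fun k => ξ ᵥ* (A ^ k * B) with hgdef
  -- Cayley–Hamilton
  have hCH : ∑ s ∈ Finset.range (nx + 1), c s • A ^ s = 0 := by
    have h := Matrix.aeval_self_charpoly A
    rwa [Polynomial.aeval_eq_sum_range, Matrix.charpoly_natDegree_eq_dim, Fintype.card_fin] at h
  have hcN : c nx = 1 := by
    have h := (Matrix.charpoly_monic A).coeff_natDegree
    rwa [Matrix.charpoly_natDegree_eq_dim, Fintype.card_fin] at h
  -- split the kernel hypothesis
  have hvelim : Sum.elim ξ ζ = v := by funext r; cases r <;> rfl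
  rw [← hvelim, sumElim_vecMul_fromRows] at hv
  -- the scalar kernel relations
  have H : ∀ j : ℕ, j ≤ T - t →
      ξ ⬝ᵥ x j + ∑ i ∈ Finset.range t, ηf i ⬝ᵥ u (i + j) = 0 := by
    intro j hj
    have hv2 := congrFun hv ⟨j, by omega⟩
    simp only [Pi.add_apply, Pi.zero_apply] at hv2
    have e1 : (ξ ᵥ* (Matrix.of fun (p : Fin nx) (j : Fin (T - t + 1)) => x (j : ℕ) p))
        ⟨j, by omega⟩ = ξ ⬝ᵥ x j := by
      simp [vecMul, dotProduct]
    have e2 : (ζ ᵥ* (Matrix.of fun (ip : Fin t × Fin nu) (j : Fin (T - t + 1)) =>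
          u ((ip.1 : ℕ) + (j : ℕ)) ip.2)) ⟨j, by omega⟩
        = ∑ i ∈ Finset.range t, ηf i ⬝ᵥ u (i + j) := by
      rw [← Fin.sum_univ_eq_sum_range (fun i => ηf i ⬝ᵥ u (i + j)) t]
      have e3 : ∀ i : Fin t, ηf (i : ℕ) ⬝ᵥ u ((i : ℕ) + j)
          = ∑ p : Fin nu, ζ (i, p) * u ((i : ℕ) + j) p := by
        intro i
        rw [hηdef]
        simp only [i.isLt, dif_pos, Fin.eta]
        rfl
      rw [Finset.sum_congr rfl fun i _ => e3 i]
      simp [vecMul, dotProduct, Fintype.sum_prod_type]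
    rw [e1, e2] at hv2
    exact hv2
  -- Step A: the combined vector annihilates the deep Hankel matrix
  have hstep : ∀ j : ℕ, j ≤ T - (nx + t) →
      ∑ m ∈ Finset.range (nx + t), Wfun nx t c g ηf m ⬝ᵥ u (j + m) = 0 := by
    intro j hj
    have h1 : ∀ m, Wfun nx t c g ηf m ⬝ᵥ u (j + m)
        = ∑ s ∈ Finset.range (nx + 1), c s *
          (((if m < s then g (s - 1 - m) else 0)
            + (if s ≤ m ∧ m - s < t then ηf (m - s) else 0)) ⬝ᵥ u (j + m)) := by
      intro m
      rw [Wfun, sum_dotProduct']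
      exact Finset.sum_congr rfl fun s _ => by rw [smul_dotProduct, smul_eq_mul]
    rw [Finset.sum_congr rfl fun m _ => h1 m, Finset.sum_comm]
    have h2 : ∀ s ∈ Finset.range (nx + 1),
        ∑ m ∈ Finset.range (nx + t), c s *
          (((if m < s then g (s - 1 - m) else 0)
            + (if s ≤ m ∧ m - s < t then ηf (m - s) else 0)) ⬝ᵥ u (j + m))
        = c s * (-((ξ ᵥ* A ^ s) ⬝ᵥ x j)) := by
      intro s hs
      have hs' : s ≤ nx := by
        have := Finset.mem_range.mp hs; omega
      rw [← Finset.mul_sum, reindex_aux nx s t j hs' g ηf u]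
      congr 1
      have hx := state_formula A B u x hdyn s j
      have hxx : ξ ⬝ᵥ x (j + s)
          = (ξ ᵥ* A ^ s) ⬝ᵥ x j + ∑ k ∈ Finset.range s, g k ⬝ᵥ u (j + s - 1 - k) := by
        rw [hx, dotProduct_add, dotProduct_mulVec, dotProduct_sum']
        congr 1
        exact Finset.sum_congr rfl fun k _ => by rw [dotProduct_mulVec]
      have hH := H (j + s) (by omega)
      have hre : ∀ i, i + (j + s) = i + (j + s) := fun _ => rfl
      linarith [hH, hxx]
    rw [Finset.sum_congr rfl h2]
    have h3 : ∑ s ∈ Finset.range (nx + 1), c s * (-((ξ ᵥ* A ^ s) ⬝ᵥ x j))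
        = -((ξ ᵥ* (∑ s ∈ Finset.range (nx + 1), c s • A ^ s)) ⬝ᵥ x j) := by
      rw [vecMul_sum', sum_dotProduct', ← Finset.sum_neg_distrib]
      refine Finset.sum_congr rfl fun s _ => ?_
      rw [vecMul_smulM, smul_dotProduct, smul_eq_mul, mul_neg]
    rw [h3, hCH]
    simp
  -- Step B: all coefficients of the combined vector vanish
  have hWzero : ∀ m, m < nx + t → Wfun nx t c g ηf m = 0 := by
    intro m hm
    have hw := hker (fun q => Wfun nx t c g ηf q.1 q.2) ?_
    · funext p
      exact congrFun hw (⟨m, hm⟩, p)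
    · funext j
      have hcol : ((fun q : Fin (nx + t) × Fin nu => Wfun nx t c g ηf q.1 q.2) ᵥ*
          (Matrix.of fun (ip : Fin (nx + t) × Fin nu) (j : Fin (T - (nx + t) + 1)) =>
            u ((ip.1 : ℕ) + (j : ℕ)) ip.2)) j
          = ∑ i : Fin (nx + t), Wfun nx t c g ηf (i : ℕ) ⬝ᵥ u ((j : ℕ) + (i : ℕ)) := by
        simp [vecMul, dotProduct, Fintype.sum_prod_type]
        refine Finset.sum_congr rfl fun i _ => ?_
        rw [add_comm (i : ℕ) (j : ℕ)]
      rw [hcol, Fin.sum_univ_eq_sum_range (fun m => Wfun nx t c g ηf m ⬝ᵥ u ((j : ℕ) + m))]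
      exact hstep (j : ℕ) (by omega)
  -- Step C: the η part vanishes
  have hηz : ∀ i, i < t → ηf i = 0 := eta_zero nx t c hcN g ηf hWzero
  -- Step D: controllability data
  have hgz : ∀ k, k < nx → g k = 0 := g_zero nx t c hcN g ηf hηz hWzero
  -- Step E: all Markov parameters are annihilated
  have hall : ∀ k : ℕ, ξ ᵥ* (A ^ k * B) = 0 := by
    rcases Nat.eq_zero_or_pos nx with h0 | h0
    · intro k
      haveI : IsEmpty (Fin nx) := by rw [h0]; infer_instance
      funext p
      simp [vecMul, dotProduct]
    · intro k
      induction k using Nat.strong_induction_on with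
      | _ k ih =>
        by_cases hk : k < nx
        · exact hgz k hk
        · push_neg at hk
          have hA : A ^ nx = -∑ s ∈ Finset.range nx, c s • A ^ s := by
            have h := hCH
            rw [Finset.sum_range_succ, hcN, one_smul] at h
            exact eq_neg_of_add_eq_zero_right h
          have hk2 : A ^ k = A ^ (k - nx) * A ^ nx := by
            rw [← pow_add]
            congr 1
            omega
          calc ξ ᵥ* (A ^ k * B) = ξ ᵥ* (A ^ (k - nx) * A ^ nx * B) := by rw [← hk2]
            _ = ξ ᵥ* (-∑ s ∈ Finset.range nx, c s • (A ^ (k - nx + s) * B)) := by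
                congr 1
                rw [hA, Matrix.mul_neg, Matrix.neg_mul]
                congr 1
                simp only [Matrix.mul_sum, Matrix.sum_mul, Matrix.mul_smul,
                  Matrix.smul_mul, pow_add, Matrix.mul_assoc]
            _ = -∑ s ∈ Finset.range nx, c s • (ξ ᵥ* (A ^ (k - nx + s) * B)) := by
                rw [vecMul_neg, vecMul_sum']
                congr 1
                exact Finset.sum_congr rfl fun s _ => by rw [vecMul_smulM]
            _ = 0 := by
                rw [Finset.sum_eq_zero fun s hs => by
                  rw [ih (k - nx + s) (by have := Finset.mem_range.mp hs; omega), smul_zero]]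
                simp
  -- conclude
  have hξ0 : ξ = 0 := hctrb ξ hall
  funext r
  cases r with
  | inl p => exact congrFun hξ0 p
  | inr q =>
    have h := congrFun (hηz (q.1 : ℕ) q.1.isLt) q.2
    rw [hηdef] at h
    simp only [q.1.isLt, dif_pos, Fin.eta] at h
    exact h
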